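/- arXiv:2311.08367 — 4 statements merged into one kernel-verified Lean document; each statement's English description precedes it below -/
import Mathlib

section
/- Let G be an n-node graph with arboricity at most α, let 0 < ε < 1, β ≥ 1, d ≥ 2(1+ε)α, and L = 2 + ⌈log_{1+ε} n⌉. Then for any (β, d, L)-decomposition (Z_1, …, Z_L) of G, the top set Z_L is empty. -/
open Finset

open scoped Classical in
/-- The edges of the subgraph of `G` induced by the vertex set `S`. -/
noncomputable def inducedEdges {V : Type*} [Fintype V] [DecidableEq V]
    (G : SimpleGraph V) [DecidableRel G.Adj] (S : Finset V) : Finset (Sym2 V) :=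
  G.edgeFinset.filter (fun e => ∀ x ∈ e, x ∈ S)

/-- `G` has arboricity at most `α`. -/
def ArboricityLE {V : Type*} [Fintype V] [DecidableEq V]
    (G : SimpleGraph V) [DecidableRel G.Adj] (α : ℝ) : Prop :=
  ∀ S : Finset V, 2 ≤ S.card → ((inducedEdges G S).card : ℝ) ≤ α * ((S.card : ℝ) - 1)

/-- The degree of `u` in the subgraph of `G` induced by `Z`. -/
def degIn {V : Type*} [Fintype V] [DecidableEq V]
    (G : SimpleGraph V) [DecidableRel G.Adj] (Z : Finset V) (u : V) : ℕ :=
  (Z.filter (fun w => G.Adj u w)).card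

/-- A `(β, d, L)`-decomposition of `G`: a nested sequence
`Z L ⊆ ⋯ ⊆ Z 1 = V` such that for all `i ∈ [L-1]`, every vertex of `Z i` of degree
`> β d` in `G[Z i]` lies in `Z (i+1)`, and no vertex of `Z i` of degree `< d` in
`G[Z i]` lies in `Z (i+1)`. -/
def IsDecomposition {V : Type*} [Fintype V] [DecidableEq V]
    (G : SimpleGraph V) [DecidableRel G.Adj] (β d : ℝ) (L : ℕ)
    (Z : ℕ → Finset V) : Prop :=
  Z 1 = Finset.univ ∧
  (∀ i, 1 ≤ i → i < L → Z (i + 1) ⊆ Z i) ∧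
  (∀ i, 1 ≤ i → i < L → ∀ u ∈ Z i,
    (β * d < (degIn G (Z i) u : ℝ) → u ∈ Z (i + 1)) ∧
    ((degIn G (Z i) u : ℝ) < d → u ∉ Z (i + 1)))

open scoped Classical in
theorem sum_degIn_le {V : Type*} [Fintype V] [DecidableEq V]
    (G : SimpleGraph V) [DecidableRel G.Adj] (Z Z' : Finset V) (hZ' : Z' ⊆ Z) :
    ∑ u ∈ Z', degIn G Z u ≤ 2 * (inducedEdges G Z).card := by
  set G' : SimpleGraph V :=
    { Adj := fun u w => G.Adj u w ∧ u ∈ Z ∧ w ∈ Z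
      symm := by constructor; intro u w ⟨h1, h2, h3⟩; exact ⟨h1.symm, h3, h2⟩
      loopless := by constructor; intro u ⟨h1, _⟩; exact G.loopless.irrefl u h1 } with hG'
  have hedge : inducedEdges G Z = G'.edgeFinset := by
    ext e
    induction e using Sym2.ind with
    | _ a b =>
      simp only [inducedEdges, Finset.mem_filter, SimpleGraph.mem_edgeFinset,
        SimpleGraph.mem_edgeSet, hG']
      constructor
      · rintro ⟨h1, h2⟩
        exact ⟨h1, h2 a (by simp), h2 b (by simp)⟩
      · rintro ⟨h1, h2, h3⟩
        refine ⟨h1, ?_⟩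
        intro x hx
        rcases Sym2.mem_iff.mp hx with rfl | rfl
        · exact h2
        · exact h3
  have hdeg : ∀ u ∈ Z, degIn G Z u = G'.degree u := by
    intro u hu
    unfold degIn
    rw [SimpleGraph.degree, SimpleGraph.neighborFinset]
    congr 1
    ext w
    simp [hG', hu, and_comm]
  calc ∑ u ∈ Z', degIn G Z u = ∑ u ∈ Z', G'.degree u := by
        apply Finset.sum_congr rfl
        intro u hu; exact hdeg u (hZ' hu)
    _ ≤ ∑ u : V, G'.degree u := Finset.sum_le_sum_of_subset (Finset.subset_univ _)
    _ = 2 * G'.edgeFinset.card := G'.sum_degrees_eq_twice_card_edges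
    _ = 2 * (inducedEdges G Z).card := by rw [hedge]

theorem inducedEdges_bound {V : Type*} [Fintype V] [DecidableEq V]
    (G : SimpleGraph V) [DecidableRel G.Adj] {α : ℝ} (hα : 0 < α)
    (hG : ArboricityLE G α) (S : Finset V) :
    ((inducedEdges G S).card : ℝ) ≤ α * (S.card : ℝ) := by
  by_cases h2 : 2 ≤ S.card
  · refine (hG S h2).trans ?_
    have : (S.card : ℝ) - 1 ≤ (S.card : ℝ) := by linarith
    nlinarith
  · have : inducedEdges G S = ∅ := by
      rw [Finset.eq_empty_iff_forall_notMem]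
      intro e he
      induction e using Sym2.ind with
      | _ a b =>
        classical
        simp only [inducedEdges, Finset.mem_filter, SimpleGraph.mem_edgeFinset,
          SimpleGraph.mem_edgeSet] at he
        obtain ⟨hab, hmem⟩ := he
        have ha : a ∈ S := hmem a (by simp)
        have hb : b ∈ S := hmem b (by simp)
        have : 2 ≤ S.card := by
          have := Finset.one_lt_card.mpr ⟨a, ha, b, hb, hab.ne⟩
          omega
        exact h2 this
    rw [this]
    simp
    positivity

/-- if `G` is an `n`-node graph of arboricity at most `α`, `0 < ε < 1`,
`β ≥ 1`, `d ≥ 2(1+ε)α` and `L = 2 + ⌈log_{1+ε} n⌉`, then the top set of any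
`(β, d, L)`-decomposition of `G` is empty. -/
theorem statement3 {V : Type*} [Fintype V] [DecidableEq V]
    (G : SimpleGraph V) [DecidableRel G.Adj] (α ε β d : ℝ)
    (hα : 0 < α) (hε : 0 < ε) (hε1 : ε < 1) (hβ : 1 ≤ β)
    (hd : 2 * (1 + ε) * α ≤ d) (L : ℕ)
    (hL : L = 2 + ⌈Real.logb (1 + ε) (Fintype.card V)⌉₊)
    (hG : ArboricityLE G α) (Z : ℕ → Finset V)
    (hZ : IsDecomposition G β d L Z) :
    Z L = ∅ := by
  obtain ⟨hZ1, hsub, hcond⟩ := hZ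
  -- key shrink: (1+ε) * |Z (i+1)| ≤ |Z i|
  have key : ∀ i, 1 ≤ i → i < L →
      (1 + ε) * ((Z (i + 1)).card : ℝ) ≤ ((Z i).card : ℝ) := by
    intro i h1 h2
    have hsubi := hsub i h1 h2
    have hdeg : ∀ u ∈ Z (i + 1), d ≤ (degIn G (Z i) u : ℝ) := by
      intro u hu
      by_contra h
      push_neg at h
      exact (hcond i h1 h2 u (hsubi hu)).2 h hu
    have hsum : d * ((Z (i + 1)).card : ℝ) ≤
        ∑ u ∈ Z (i + 1), (degIn G (Z i) u : ℝ) := by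
      rw [mul_comm]
      calc ((Z (i+1)).card : ℝ) * d = ∑ _u ∈ Z (i+1), d := by
            rw [Finset.sum_const, nsmul_eq_mul]
        _ ≤ _ := Finset.sum_le_sum hdeg
    have hsum2 : (∑ u ∈ Z (i + 1), (degIn G (Z i) u : ℝ)) ≤
        2 * ((inducedEdges G (Z i)).card : ℝ) := by
      have := sum_degIn_le G (Z i) (Z (i + 1)) hsubi
      calc (∑ u ∈ Z (i + 1), (degIn G (Z i) u : ℝ))
          = ((∑ u ∈ Z (i + 1), degIn G (Z i) u : ℕ) : ℝ) := by push_cast; ring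
        _ ≤ ((2 * (inducedEdges G (Z i)).card : ℕ) : ℝ) := by exact_mod_cast this
        _ = 2 * ((inducedEdges G (Z i)).card : ℝ) := by push_cast; ring
    have hedges := inducedEdges_bound G hα hG (Z i)
    have h1' : d * ((Z (i + 1)).card : ℝ) ≤ 2 * α * ((Z i).card : ℝ) := by
      linarith
    have h2' : 2 * (1 + ε) * α * ((Z (i + 1)).card : ℝ) ≤ d * ((Z (i + 1)).card : ℝ) := by
      have : (0:ℝ) ≤ ((Z (i + 1)).card : ℝ) := by positivity
      nlinarith
    nlinarith
  -- iterate
  have iter : ∀ k, 1 + k ≤ L →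
      (1 + ε) ^ k * ((Z (1 + k)).card : ℝ) ≤ (Fintype.card V : ℝ) := by
    intro k
    induction k with
    | zero => intro _; simp [hZ1]
    | succ m ih =>
      intro hm
      have hm' : 1 + m ≤ L := by omega
      have hlt : 1 + m < L := by omega
      have hk := key (1 + m) (by omega) hlt
      have hpos : (0:ℝ) < (1 + ε) ^ m := by positivity
      have harg : 1 + (m + 1) = 1 + m + 1 := by omega
      have : (1 + ε) ^ (m + 1) * ((Z (1 + (m + 1))).card : ℝ)
          = (1 + ε) ^ m * ((1 + ε) * ((Z (1 + m + 1)).card : ℝ)) := by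
        rw [harg, pow_succ]; ring
      rw [this]
      calc (1 + ε) ^ m * ((1 + ε) * ((Z (1 + m + 1)).card : ℝ))
          ≤ (1 + ε) ^ m * ((Z (1 + m)).card : ℝ) := by
            apply mul_le_mul_of_nonneg_left hk hpos.le
        _ ≤ (Fintype.card V : ℝ) := ih hm'
  set n := Fintype.card V with hn
  by_cases hn0 : n = 0
  · have : IsEmpty V := Fintype.card_eq_zero_iff.mp hn0
    exact Finset.eq_empty_of_isEmpty _
  · have hn1 : 1 ≤ n := Nat.one_le_iff_ne_zero.mpr hn0
    have hnpos : (0:ℝ) < (n : ℝ) := by exact_mod_cast hn1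
    set c := ⌈Real.logb (1 + ε) (n : ℝ)⌉₊ with hc
    have hLval : L = 2 + c := by rw [hL]
    have hLk : L = 1 + (1 + c) := by omega
    have hiter := iter (1 + c) (by omega)
    rw [← hLk] at hiter
    -- (1+ε)^(1+c) ≥ (1+ε) * n
    have hb1 : (1:ℝ) < 1 + ε := by linarith
    have hcn : (n : ℝ) ≤ (1 + ε) ^ c := by
      have h1 : Real.logb (1 + ε) (n : ℝ) ≤ (c : ℝ) := Nat.le_ceil _
      have h2 : (1 + ε) ^ ((Real.logb (1 + ε) (n : ℝ)) : ℝ) ≤ (1 + ε) ^ (c : ℝ) := by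
        apply Real.rpow_le_rpow_of_exponent_le hb1.le h1
      rw [Real.rpow_logb (by linarith) (by linarith) hnpos] at h2
      rwa [Real.rpow_natCast] at h2
    have hpow : (1 + ε) * (n : ℝ) ≤ (1 + ε) ^ (1 + c) := by
      rw [pow_add, pow_one]
      apply mul_le_mul_of_nonneg_left hcn (by linarith)
    -- conclude card = 0
    by_contra hne
    have hcard : 1 ≤ (Z L).card := Finset.card_pos.mpr (Finset.nonempty_iff_ne_empty.mpr hne)
    have hcard' : (1:ℝ) ≤ ((Z L).card : ℝ) := by exact_mod_cast hcard
    have hpow_pos : (0:ℝ) < (1 + ε) ^ (1 + c) := by positivity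
    have : (1 + ε) ^ (1 + c) ≤ (n : ℝ) := by
      calc (1 + ε) ^ (1 + c) = (1 + ε) ^ (1 + c) * 1 := by ring
        _ ≤ (1 + ε) ^ (1 + c) * ((Z L).card : ℝ) := by
            apply mul_le_mul_of_nonneg_left hcard' hpow_pos.le
        _ ≤ (n : ℝ) := hiter
    nlinarith
end

section
/- Let (Z_1, …, Z_L) be a (β, d, L)-decomposition of a graph G with arboricity at most α, where d ≥ 2(1+ε)α and ε > 0. Then for every i ∈ [L−1], |Z_{i+1}| ≤ |Z_i|/(1+ε). -/
open Finset

open scoped Classical in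
lemma handshake_degIn {V : Type*} [Fintype V] [DecidableEq V]
    (G : SimpleGraph V) [DecidableRel G.Adj] (S : Finset V) :
    ∑ u ∈ S, degIn G S u = 2 * (inducedEdges G S).card := by
  classical
  let H : SimpleGraph V :=
    { Adj := fun u v => u ∈ S ∧ v ∈ S ∧ G.Adj u v
      symm := by
        constructor
        intro a b h
        exact ⟨h.2.1, h.1, h.2.2.symm⟩
      loopless := by
        constructor
        intro a h
        exact G.loopless.irrefl a h.2.2 }
  have hdeg : ∀ u, H.degree u = if u ∈ S then degIn G S u else 0 := by
    intro u
    by_cases hu : u ∈ S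
    · simp only [hu, if_true]
      rw [SimpleGraph.degree, degIn]
      congr 1
      ext v
      simp [SimpleGraph.neighborFinset, hu, and_comm, SimpleGraph.mem_neighborFinset, H]
    · simp only [hu, if_false]
      rw [SimpleGraph.degree]
      convert Finset.card_empty
      ext v
      simp only [SimpleGraph.mem_neighborFinset, Finset.notMem_empty, iff_false]
      exact fun h => hu h.1
  have hedge : H.edgeFinset = inducedEdges G S := by
    ext e
    induction e with
    | _ a b =>
      simp only [SimpleGraph.mem_edgeFinset, SimpleGraph.mem_edgeSet, inducedEdges,
        Finset.mem_filter, Sym2.mem_iff]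
      constructor
      · rintro ⟨ha, hb, hadj⟩
        refine ⟨?_, by rintro x (rfl | rfl) <;> assumption⟩
        exact hadj
      · rintro ⟨he, hx⟩
        exact ⟨hx a (Or.inl rfl), hx b (Or.inr rfl), he⟩
  have h1 : ∑ u ∈ S, degIn G S u = ∑ u, H.degree u := by
    rw [← Finset.sum_subset (Finset.subset_univ S)]
    · apply Finset.sum_congr rfl
      intro u hu; rw [hdeg u, if_pos hu]
    · intro u _ hu; rw [hdeg u, if_neg hu]
  rw [h1, SimpleGraph.sum_degrees_eq_twice_card_edges, hedge]

/-- in a `(β, d, L)`-decomposition of a graph of arboricity at most `α`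
with `d ≥ 2(1+ε)α` and `ε > 0`, each level set shrinks: `|Z (i+1)| ≤ |Z i|/(1+ε)`
for all `i ∈ [L-1]`. -/
theorem statement4 {V : Type*} [Fintype V] [DecidableEq V]
    (G : SimpleGraph V) [DecidableRel G.Adj] (α ε β d : ℝ)
    (hα : 0 < α) (hε : 0 < ε) (hβ : 1 ≤ β)
    (hd : 2 * (1 + ε) * α ≤ d) (L : ℕ)
    (hG : ArboricityLE G α) (Z : ℕ → Finset V)
    (hZ : IsDecomposition G β d L Z) :
    ∀ i, 1 ≤ i → i < L → ((Z (i + 1)).card : ℝ) ≤ (Z i).card / (1 + ε) := by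
  obtain ⟨hZ1, hsub, hrule⟩ := hZ
  intro i hi hiL
  have h1ε : (0:ℝ) < 1 + ε := by linarith
  have hd0 : (0:ℝ) < d := lt_of_lt_of_le (by nlinarith) hd
  by_cases hne : (Z (i+1)).Nonempty
  · have hsubi := hsub i hi hiL
    have hdegd : ∀ u ∈ Z (i+1), d ≤ (degIn G (Z i) u : ℝ) := by
      intro u hu
      by_contra h
      exact (hrule i hi hiL u (hsubi hu)).2 (lt_of_not_ge h) hu
    obtain ⟨u, hu⟩ := hne
    have hdu0 : 0 < degIn G (Z i) u := by
      by_contra h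
      push_neg at h
      interval_cases h' : degIn G (Z i) u
      · have := hdegd u hu; simp [h'] at this; linarith
    obtain ⟨w, hw⟩ := Finset.card_pos.mp hdu0
    rw [Finset.mem_filter] at hw
    have hcard2 : 2 ≤ (Z i).card :=
      Finset.one_lt_card.mpr ⟨u, hsubi hu, w, hw.1, G.ne_of_adj hw.2⟩
    have hsum1 : d * ((Z (i+1)).card : ℝ) ≤ ∑ u ∈ Z (i+1), (degIn G (Z i) u : ℝ) := by
      calc d * ((Z (i+1)).card : ℝ) = ∑ _u ∈ Z (i+1), d := by
            rw [Finset.sum_const, nsmul_eq_mul, mul_comm]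
        _ ≤ _ := Finset.sum_le_sum hdegd
    have hsum2 : ∑ u ∈ Z (i+1), (degIn G (Z i) u : ℝ) ≤ ∑ u ∈ Z i, (degIn G (Z i) u : ℝ) :=
      Finset.sum_le_sum_of_subset_of_nonneg hsubi (by intros; positivity)
    have hsum3 : (∑ u ∈ Z i, (degIn G (Z i) u : ℝ)) = 2 * ((inducedEdges G (Z i)).card : ℝ) := by
      rw [← Nat.cast_sum, handshake_degIn]
      push_cast; ring
    have harb := hG (Z i) hcard2
    have key : d * ((Z (i+1)).card : ℝ) ≤ 2 * α * ((Z i).card : ℝ) := by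
      calc d * ((Z (i+1)).card : ℝ) ≤ 2 * ((inducedEdges G (Z i)).card : ℝ) := by
            rw [← hsum3]; exact hsum1.trans hsum2
        _ ≤ 2 * (α * ((Z i).card - 1)) := by linarith
        _ ≤ 2 * α * ((Z i).card : ℝ) := by nlinarith
    rw [le_div_iff₀ h1ε]
    have hA : (0:ℝ) ≤ ((Z (i+1)).card : ℝ) := by positivity
    nlinarith [mul_le_mul_of_nonneg_right hd hA]
  · rw [Finset.not_nonempty_iff_eq_empty] at hne
    rw [hne]
    simp
    positivity
end

section
/- Every graph G with maximum degree Δ and arboricity at most α admits a proper edge coloring using at most Δ + 2α − 1 colors. -/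
open Finset

open scoped Classical in
/-- arboricity is inherited by subgraphs -/
lemma arbo_mono {V : Type*} [Fintype V] [DecidableEq V]
    (G : SimpleGraph V) [DecidableRel G.Adj] (H : SimpleGraph V) [DecidableRel H.Adj]
    (hle : H ≤ G) (α : ℝ) (hG : ArboricityLE G α) : ArboricityLE H α := by
  intro S hS
  refine le_trans ?_ (hG S hS)
  have hsub : inducedEdges H S ⊆ inducedEdges G S := by
    intro e he
    simp only [inducedEdges, Finset.mem_filter] at he ⊢
    exact ⟨SimpleGraph.edgeFinset_mono hle he.1, he.2⟩
  exact_mod_cast Finset.card_le_card hsub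

open scoped Classical in
/-- If a graph with arboricity ≤ α has an edge, then it has a vertex of
positive degree at most 2α - 1.  (And α ≥ 1.) -/
lemma exists_low_deg {V : Type*} [Fintype V] [DecidableEq V]
    (H : SimpleGraph V) [DecidableRel H.Adj] (α : ℕ)
    (hH : ArboricityLE H (α : ℝ)) (hne : H.edgeFinset.Nonempty) :
    1 ≤ α ∧ ∃ v, 0 < H.degree v ∧ H.degree v ≤ 2 * α - 1 := by
  obtain ⟨e, he⟩ := hne
  induction e with | h u v =>
  rw [SimpleGraph.mem_edgeFinset, SimpleGraph.mem_edgeSet] at he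
  have hune : u ≠ v := H.ne_of_adj he
  -- α ≥ 1
  have hα : 1 ≤ α := by
    have h2 : ({u, v} : Finset V).card = 2 := by
      rw [Finset.card_insert_of_notMem (by simpa using hune), Finset.card_singleton]
    have := hH {u, v} (by rw [h2])
    rw [h2] at this
    have hmem : s(u, v) ∈ inducedEdges H {u, v} := by
      simp only [inducedEdges, Finset.mem_filter, SimpleGraph.mem_edgeFinset,
        SimpleGraph.mem_edgeSet]
      refine ⟨he, ?_⟩
      intro x hx
      rw [Sym2.mem_iff] at hx
      rcases hx with rfl | rfl <;> simp
    have h1 : 1 ≤ (inducedEdges H {u, v}).card := Finset.card_pos.mpr ⟨_, hmem⟩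
    norm_num at this
    omega
  refine ⟨hα, ?_⟩
  -- support set
  set S : Finset V := Finset.univ.filter (fun v => 0 < H.degree v) with hS
  have hmemS : ∀ w x, H.Adj w x → w ∈ S := by
    intro w x hwx
    simp only [hS, Finset.mem_filter, Finset.mem_univ, true_and]
    rw [← SimpleGraph.card_neighborFinset_eq_degree]
    exact Finset.card_pos.mpr ⟨x, (SimpleGraph.mem_neighborFinset H w x).mpr hwx⟩
  have hScard : 2 ≤ S.card := by
    have : ({u, v} : Finset V) ⊆ S := by
      intro x hx
      rcases Finset.mem_insert.mp hx with rfl | hx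
      · exact hmemS _ _ he
      · rw [Finset.mem_singleton] at hx; subst hx; exact hmemS _ _ he.symm
    calc 2 = ({u, v} : Finset V).card := by
              rw [Finset.card_insert_of_notMem (by simpa using hune), Finset.card_singleton]
      _ ≤ S.card := Finset.card_le_card this
  -- all edges are induced on S
  have hedges : inducedEdges H S = H.edgeFinset := by
    apply Finset.filter_eq_self.mpr
    intro e hee
    rw [SimpleGraph.mem_edgeFinset] at hee
    induction e with | h a b =>
    rw [SimpleGraph.mem_edgeSet] at hee
    intro x hx
    rw [Sym2.mem_iff] at hx
    rcases hx with rfl | rfl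
    · exact hmemS _ _ hee
    · exact hmemS _ _ hee.symm
  -- by contradiction all degrees in S ≥ 2α
  by_contra hcon
  push_neg at hcon
  have hdeg : ∀ w ∈ S, 2 * α ≤ H.degree w := by
    intro w hw
    simp only [hS, Finset.mem_filter] at hw
    have := hcon w hw.2
    omega
  have hsum : ∑ w ∈ S, H.degree w = 2 * H.edgeFinset.card := by
    rw [← SimpleGraph.sum_degrees_eq_twice_card_edges]
    apply Finset.sum_subset (Finset.subset_univ S)
    intro x _ hx
    simp only [hS, Finset.mem_filter, Finset.mem_univ, true_and] at hx
    omega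
  have hlow : 2 * α * S.card ≤ 2 * H.edgeFinset.card := by
    rw [← hsum]
    calc 2 * α * S.card = ∑ _w ∈ S, 2 * α := by rw [Finset.sum_const, smul_eq_mul, mul_comm]
      _ ≤ ∑ w ∈ S, H.degree w := Finset.sum_le_sum hdeg
  have hup := hH S hScard
  rw [hedges] at hup
  have hupn : (2 * H.edgeFinset.card : ℝ) ≤ 2 * α * ((S.card : ℝ) - 1) := by
    linarith
  have hlown : (2 * α * S.card : ℝ) ≤ (2 * H.edgeFinset.card : ℝ) := by exact_mod_cast hlow
  have hSpos : (0 : ℝ) < (α : ℝ) := by exact_mod_cast hα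
  nlinarith [hupn, hlown, hSpos]

open scoped Classical in
lemma aux_color {V : Type*} [Fintype V] [DecidableEq V]
    (G : SimpleGraph V) [DecidableRel G.Adj] (α : ℕ)
    (hG : ArboricityLE G (α : ℝ)) :
    ∀ n : ℕ, ∀ H : SimpleGraph V, H ≤ G → H.edgeFinset.card ≤ n →
    ∃ χ : Sym2 V → ℕ,
      (∀ e ∈ H.edgeSet, χ e ∈ Finset.Icc 1 (G.maxDegree + 2 * α - 1)) ∧
      (∀ e ∈ H.edgeSet, ∀ f ∈ H.edgeSet, e ≠ f → (∃ x, x ∈ e ∧ x ∈ f) → χ e ≠ χ f) := by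
  intro n
  induction n with
  | zero =>
    intro H _ hcard
    have : H.edgeFinset = ∅ := Finset.card_eq_zero.mp (Nat.le_zero.mp hcard)
    have hempty : ∀ e, e ∉ H.edgeSet := by
      intro e he
      have : e ∈ H.edgeFinset := SimpleGraph.mem_edgeFinset.mpr he
      simp_all
    exact ⟨fun _ => 0, fun e he => absurd he (hempty e), fun e he => absurd he (hempty e)⟩
  | succ n ih =>
    intro H hle hcard
    by_cases hne : H.edgeFinset.Nonempty
    · -- find low degree vertex v and an edge e = s(u,v)
      obtain ⟨hα, v, hvpos, hvdeg⟩ :=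
        exists_low_deg H α (arbo_mono G H hle (α : ℝ) hG) hne
      have : (H.neighborFinset v).Nonempty := by
        rw [← Finset.card_pos, SimpleGraph.card_neighborFinset_eq_degree]; exact hvpos
      obtain ⟨u, hu⟩ := this
      rw [SimpleGraph.mem_neighborFinset] at hu
      -- hu : H.Adj v u
      set e : Sym2 V := s(u, v) with he_def
      have he_mem : e ∈ H.edgeSet := H.mem_edgeSet.mpr hu.symm
      set H' := H.deleteEdges {e} with hH'
      have hle' : H' ≤ H := SimpleGraph.deleteEdges_le _
      have hE' : H'.edgeSet = H.edgeSet \ {e} := SimpleGraph.edgeSet_deleteEdges _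
      have hsub : H'.edgeFinset ⊂ H.edgeFinset := by
        rw [Finset.ssubset_iff_of_subset (SimpleGraph.edgeFinset_mono hle')]
        refine ⟨e, SimpleGraph.mem_edgeFinset.mpr he_mem, ?_⟩
        rw [SimpleGraph.mem_edgeFinset, hE']
        simp
      have hcard' : H'.edgeFinset.card ≤ n := by
        have := Finset.card_lt_card hsub
        omega
      obtain ⟨χ, hχIcc, hχprop⟩ := ih H' (le_trans hle' hle) (by convert hcard')
      -- the forbidden colors
      set F : Finset ℕ :=
        ((H.incidenceFinset u ∪ H.incidenceFinset v).erase e).image χ with hF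
      have heu : e ∈ H.incidenceFinset u := by
        rw [SimpleGraph.mem_incidenceFinset]
        exact ⟨he_mem, by simp [he_def]⟩
      have hFcard : F.card ≤ G.maxDegree + 2 * α - 2 := by
        have h1 : F.card ≤ ((H.incidenceFinset u ∪ H.incidenceFinset v).erase e).card :=
          Finset.card_image_le
        have h2 : ((H.incidenceFinset u ∪ H.incidenceFinset v).erase e).card =
            (H.incidenceFinset u ∪ H.incidenceFinset v).card - 1 :=
          Finset.card_erase_of_mem (Finset.mem_union_left _ heu)
        have h3 : (H.incidenceFinset u ∪ H.incidenceFinset v).card ≤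
            H.degree u + H.degree v := by
          calc (H.incidenceFinset u ∪ H.incidenceFinset v).card
              ≤ (H.incidenceFinset u).card + (H.incidenceFinset v).card :=
                Finset.card_union_le _ _
            _ = H.degree u + H.degree v := by
                rw [SimpleGraph.card_incidenceFinset_eq_degree,
                  SimpleGraph.card_incidenceFinset_eq_degree]
        have hdu : H.degree u ≤ G.maxDegree := by
          refine le_trans ?_ (G.degree_le_maxDegree u)
          apply Finset.card_le_card
          intro w hw
          rw [SimpleGraph.mem_neighborFinset] at hw ⊢
          exact hle hw
        have hdupos : 1 ≤ H.degree u := by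
          rw [← SimpleGraph.card_neighborFinset_eq_degree]
          exact Finset.card_pos.mpr ⟨v, (SimpleGraph.mem_neighborFinset H u v).mpr hu.symm⟩
        omega
      have hIcc_card : (Finset.Icc 1 (G.maxDegree + 2 * α - 1)).card =
          G.maxDegree + 2 * α - 1 := by
        rw [Nat.card_Icc]; omega
      have hΔpos : 1 ≤ G.maxDegree := by
        have : 1 ≤ G.degree u := by
          rw [← SimpleGraph.card_neighborFinset_eq_degree]
          refine Finset.card_pos.mpr ⟨v, ?_⟩
          rw [SimpleGraph.mem_neighborFinset]
          exact hle hu.symm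
        exact le_trans this (G.degree_le_maxDegree u)
      have hexists : ∃ c ∈ Finset.Icc 1 (G.maxDegree + 2 * α - 1), c ∉ F := by
        by_contra hc
        push_neg at hc
        have hs : Finset.Icc 1 (G.maxDegree + 2 * α - 1) ⊆ F := hc
        have := Finset.card_le_card hs
        rw [hIcc_card] at this
        omega
      obtain ⟨c, hcIcc, hcF⟩ := hexists
      refine ⟨fun f => if f = e then c else χ f, ?_, ?_⟩
      · intro f hf
        by_cases hfe : f = e
        · simpa [hfe] using hcIcc
        · simp only [if_neg hfe]
          exact hχIcc f (by rw [hE']; exact ⟨hf, hfe⟩)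
      · intro f hf g hg hfg hshare
        -- membership in F for edges adjacent to e
        have key : ∀ h ∈ H.edgeSet, h ≠ e → (∃ x, x ∈ h ∧ x ∈ e) → χ h ∈ F := by
          intro h hh hhe ⟨x, hxh, hxe⟩
          apply Finset.mem_image_of_mem
          rw [Finset.mem_erase]
          refine ⟨hhe, ?_⟩
          rw [he_def, Sym2.mem_iff] at hxe
          rcases hxe with rfl | rfl
          · exact Finset.mem_union_left _ (by
              rw [SimpleGraph.mem_incidenceFinset]; exact ⟨hh, hxh⟩)
          · exact Finset.mem_union_right _ (by
              rw [SimpleGraph.mem_incidenceFinset]; exact ⟨hh, hxh⟩)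
        by_cases hfe : f = e
        · have hge : g ≠ e := fun h => hfg (hfe.trans h.symm)
          intro h'
          simp only [if_pos hfe, if_neg hge] at h'
          have hsh : ∃ x, x ∈ g ∧ x ∈ e := by
            obtain ⟨x, hx1, hx2⟩ := hshare
            exact ⟨x, hx2, hfe ▸ hx1⟩
          exact hcF (by rw [h']; exact key g hg hge hsh)
        · by_cases hge : g = e
          · intro h'
            simp only [if_neg hfe, if_pos hge] at h'
            have hsh : ∃ x, x ∈ f ∧ x ∈ e := by
              obtain ⟨x, hx1, hx2⟩ := hshare
              exact ⟨x, hx1, hge ▸ hx2⟩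
            exact hcF (by rw [← h']; exact key f hf hfe hsh)
          · simp only [if_neg hfe, if_neg hge]
            refine hχprop f ?_ g ?_ hfg hshare
            · rw [hE']; exact ⟨hf, hfe⟩
            · rw [hE']; exact ⟨hg, hge⟩
    · -- no edges
      rw [Finset.not_nonempty_iff_eq_empty] at hne
      have hempty : ∀ e, e ∉ H.edgeSet := by
        intro e he
        have : e ∈ H.edgeFinset := SimpleGraph.mem_edgeFinset.mpr he
        simp_all
      exact ⟨fun _ => 0, fun e he => absurd he (hempty e), fun e he => absurd he (hempty e)⟩

/-- every graph of maximum degree `Δ` and arboricity at most `α` admits a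
proper edge coloring with colors from `{1, …, Δ + 2α - 1}`. -/
theorem statement8 {V : Type*} [Fintype V] [DecidableEq V]
    (G : SimpleGraph V) [DecidableRel G.Adj] (α : ℕ)
    (hG : ArboricityLE G (α : ℝ)) :
    ∃ χ : Sym2 V → ℕ,
      (∀ e ∈ G.edgeSet, χ e ∈ Finset.Icc 1 (G.maxDegree + 2 * α - 1)) ∧
      (∀ e ∈ G.edgeSet, ∀ f ∈ G.edgeSet, e ≠ f → (∃ x, x ∈ e ∧ x ∈ f) → χ e ≠ χ f) := by
  exact aux_color G α hG _ G le_rfl le_rfl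
end

section
/- For any n-node graph G with maximum degree Δ and arboricity α, any proper partial (Δ + (2+ε)α)-edge coloring of G leaving a single edge e uncolored can be extended to a proper (Δ + (2+ε)α)-edge coloring of all of G by changing the colors of at most O(log n / ε) edges (specifically, at most 2 + ⌈log_{1+ε} n⌉ edges). -/
open Finset

/-- `χ` is a proper partial edge coloring of `G`: any two distinct edges of `G`
sharing an endpoint do not receive the same color (uncolored edges get `none`). -/
def IsProperPartialEdgeColoring {V : Type*} (G : SimpleGraph V)
    (χ : Sym2 V → Option ℕ) : Prop :=
  ∀ e ∈ G.edgeSet, ∀ f ∈ G.edgeSet, e ≠ f → (∃ x, x ∈ e ∧ x ∈ f) →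
    ∀ c : ℕ, χ e = some c → χ f ≠ some c

section St19Helpers

variable {V : Type*} [Fintype V] [DecidableEq V] (G : SimpleGraph V) [DecidableRel G.Adj]

lemma st19_mem_inducedEdges {S : Finset V} {e : Sym2 V} :
    e ∈ inducedEdges G S ↔ e ∈ G.edgeFinset ∧ ∀ x ∈ e, x ∈ S := by
  classical
  simp [inducedEdges]

lemma st19_inducedEdges_mono {T S : Finset V} (h : T ⊆ S) :
    inducedEdges G T ⊆ inducedEdges G S := by
  intro e he
  rw [st19_mem_inducedEdges] at he ⊢
  exact ⟨he.1, fun x hx => h (he.2 x hx)⟩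

lemma st19_inducedEdges_card_le {α : ℝ} (hG : ArboricityLE G α)
    {T : Finset V} (hT : 1 ≤ T.card) :
    ((inducedEdges G T).card : ℝ) ≤ α * ((T.card : ℝ) - 1) := by
  rcases le_or_gt 2 T.card with h2 | h2
  · exact hG T h2
  · have hc1 : T.card = 1 := by omega
    have hemp : inducedEdges G T = ∅ := by
      rw [eq_empty_iff_forall_notMem]
      intro e
      induction e using Sym2.ind with
      | _ x y =>
        intro heT
        rw [st19_mem_inducedEdges] at heT
        have hadj : G.Adj x y := SimpleGraph.mem_edgeFinset.mp heT.1
        have hx := heT.2 x (Sym2.mem_mk_left _ _)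
        have hy := heT.2 y (Sym2.mem_mk_right _ _)
        have hne : x ≠ y := hadj.ne
        have hsub : ({x, y} : Finset V) ⊆ T := by
          intro z hz; rcases mem_insert.mp hz with rfl | hz
          · exact hx
          · exact (mem_singleton.mp hz) ▸ hy
        have := card_le_card hsub
        rw [card_insert_of_notMem (by simpa using hne), card_singleton] at this
        omega
    rw [hemp]
    simp [hc1]

lemma st19_sum_degIn_le (S T : Finset V) (hTS : T ⊆ S) :
    ∑ v ∈ T, (G.neighborFinset v ∩ S).card
      ≤ (inducedEdges G T).card + (inducedEdges G S).card := by
  classical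
  set P : Finset (V × V) := (T ×ˢ S).filter (fun p => G.Adj p.1 p.2) with hP
  have hPmem : ∀ p : V × V, p ∈ P ↔ p.1 ∈ T ∧ p.2 ∈ S ∧ G.Adj p.1 p.2 := by
    intro p; simp [hP, mem_filter, mem_product, and_assoc]
  have hPcard : P.card = ∑ v ∈ T, (G.neighborFinset v ∩ S).card := by
    rw [card_eq_sum_card_fiberwise (f := Prod.fst) (t := T)
      (fun p hp => ((hPmem p).1 hp).1)]
    refine Finset.sum_congr rfl (fun v hv => ?_)
    have : P.filter (fun p => p.1 = v) = (G.neighborFinset v ∩ S).image (fun w => (v, w)) := by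
      ext ⟨a, b⟩
      simp only [mem_filter, hPmem, mem_image, mem_inter, SimpleGraph.mem_neighborFinset]
      constructor
      · rintro ⟨⟨h1, h2, h3⟩, rfl⟩; exact ⟨b, ⟨h3, h2⟩, rfl⟩
      · rintro ⟨w, ⟨hw1, hw2⟩, h⟩
        injection h with h1 h2; subst h1; subst h2
        exact ⟨⟨hv, hw2, hw1⟩, rfl⟩
    rw [this, card_image_of_injective _ (fun a b h => by injection h)]
  have hsplit : P.card
      = (P.filter (fun p => p.2 ∈ T)).card + (P.filter (fun p => p.2 ∉ T)).card := by
    rw [card_filter_add_card_filter_not]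
  set q : V × V → Sym2 V := fun p => s(p.1, p.2) with hq
  have h2 : (P.filter (fun p => p.2 ∈ T)).card ≤ 2 * (inducedEdges G T).card := by
    set P2 := P.filter (fun p => p.2 ∈ T) with hP2
    have himg : P2.image q ⊆ inducedEdges G T := by
      intro b hb
      rcases mem_image.mp hb with ⟨p, hp, rfl⟩
      rcases mem_filter.mp hp with ⟨hpP, hp2⟩
      rcases (hPmem p).1 hpP with ⟨h1, _, h3⟩
      rw [st19_mem_inducedEdges]
      refine ⟨SimpleGraph.mem_edgeFinset.mpr h3, ?_⟩
      intro x hx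
      rcases Sym2.mem_iff.mp hx with rfl | rfl
      · exact h1
      · exact hp2
    calc P2.card ≤ 2 * (P2.image q).card := by
          apply card_le_mul_card_image
          intro b hb
          rcases mem_image.mp hb with ⟨p₀, hp₀, rfl⟩
          have hsub : P2.filter (fun a => q a = q p₀) ⊆ {p₀, (p₀.2, p₀.1)} := by
            intro p hp
            rcases mem_filter.mp hp with ⟨_, hqp⟩
            have := Sym2.eq_iff.mp hqp
            simp only [mem_insert, mem_singleton]
            rcases this with ⟨ha, hb'⟩ | ⟨ha, hb'⟩
            · left; exact Prod.ext ha hb'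
            · right; exact Prod.ext ha hb'
          calc (P2.filter (fun a => q a = q p₀)).card
              ≤ ({p₀, (p₀.2, p₀.1)} : Finset (V × V)).card := card_le_card hsub
            _ ≤ 2 := card_insert_le _ _ |>.trans (by simp)
      _ ≤ 2 * (inducedEdges G T).card := Nat.mul_le_mul_left 2 (card_le_card himg)
  have h1 : (P.filter (fun p => p.2 ∉ T)).card
      ≤ (inducedEdges G S).card - (inducedEdges G T).card := by
    set P1 := P.filter (fun p => p.2 ∉ T) with hP1
    have hinj : Set.InjOn q P1 := by
      intro p hp p' hp' hqq
      rcases mem_filter.mp hp with ⟨hpP, hp2⟩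
      rcases mem_filter.mp hp' with ⟨hpP', hp2'⟩
      have h1p := (hPmem p).1 hpP
      have h1p' := (hPmem p').1 hpP'
      rcases Sym2.eq_iff.mp hqq with ⟨ha, hb'⟩ | ⟨ha, hb'⟩
      · exact Prod.ext ha hb'
      · exact absurd (ha ▸ h1p.1) hp2'
    have himg : P1.image q ⊆ (inducedEdges G S) \ (inducedEdges G T) := by
      intro b hb
      rcases mem_image.mp hb with ⟨p, hp, rfl⟩
      rcases mem_filter.mp hp with ⟨hpP, hp2⟩
      rcases (hPmem p).1 hpP with ⟨hh1, hh2, hh3⟩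
      rw [mem_sdiff, st19_mem_inducedEdges, st19_mem_inducedEdges]
      refine ⟨⟨SimpleGraph.mem_edgeFinset.mpr hh3, ?_⟩, ?_⟩
      · intro x hx
        rcases Sym2.mem_iff.mp hx with rfl | rfl
        · exact hTS hh1
        · exact hh2
      · rintro ⟨-, hall⟩
        exact hp2 (hall p.2 (Sym2.mem_mk_right _ _))
    calc P1.card = (P1.image q).card := (card_image_of_injOn hinj).symm
      _ ≤ ((inducedEdges G S) \ (inducedEdges G T)).card := card_le_card himg
      _ = (inducedEdges G S).card - (inducedEdges G T).card :=
          card_sdiff_of_subset (st19_inducedEdges_mono G hTS)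
  have hle : (inducedEdges G T).card ≤ (inducedEdges G S).card :=
    card_le_card (st19_inducedEdges_mono G hTS)
  omega

/-- The peeling sets: `Zset G D 0 = univ`, and `Zset G D (k+1)` keeps the vertices of
`Zset G D k` with at least `D+1` neighbors inside `Zset G D k`. -/
noncomputable def Zset (D : ℕ) : ℕ → Finset V
  | 0 => univ
  | k+1 => (Zset D k).filter (fun v => D + 1 ≤ (G.neighborFinset v ∩ Zset D k).card)

lemma Zset_succ_subset (D k : ℕ) : Zset G D (k+1) ⊆ Zset G D k := filter_subset _ _

lemma Zset_antitone (D : ℕ) : ∀ {l m : ℕ}, l ≤ m → Zset G D m ⊆ Zset G D l := by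
  intro l m h
  induction h with
  | refl => exact subset_rfl
  | step h ih => exact (Zset_succ_subset G D _).trans ih

lemma Zset_shrink {α ε : ℝ} {D : ℕ} (hG : ArboricityLE G α) (hα : 1 ≤ α)
    (hε : 0 < ε) (hD : (2 + ε) * α + 1 ≤ (D : ℝ) + 1) (k : ℕ) :
    ((Zset G D (k+1)).card : ℝ) * (1 + ε) ≤ ((Zset G D k).card : ℝ) := by
  set T := Zset G D (k+1) with hT
  set S := Zset G D k with hS
  have hTS : T ⊆ S := Zset_succ_subset G D k
  rcases Finset.eq_empty_or_nonempty T with hemp | hne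
  · rw [hemp]; simp
  · have ht1 : 1 ≤ T.card := card_pos.mpr hne
    have hs1 : 1 ≤ S.card := card_pos.mpr (hne.mono hTS)
    have hsum : T.card * (D + 1) ≤ ∑ v ∈ T, (G.neighborFinset v ∩ S).card := by
      have := Finset.card_nsmul_le_sum T (fun v => (G.neighborFinset v ∩ S).card) (D+1)
        (fun v hv => (mem_filter.mp hv).2)
      simpa [smul_eq_mul] using this
    have hsum2 := st19_sum_degIn_le G S T hTS
    have heT := st19_inducedEdges_card_le G hG ht1
    have heS := st19_inducedEdges_card_le G hG hs1
    have hreal : (T.card : ℝ) * ((D : ℝ) + 1)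
        ≤ α * ((T.card : ℝ) - 1) + α * ((S.card : ℝ) - 1) := by
      have h1 : (T.card : ℝ) * ((D : ℝ) + 1)
          ≤ ((inducedEdges G T).card : ℝ) + ((inducedEdges G S).card : ℝ) := by
        have := hsum.trans hsum2
        exact_mod_cast this
      linarith
    have ht0 : (0:ℝ) ≤ (T.card : ℝ) := by positivity
    have ht1' : (1:ℝ) ≤ (T.card : ℝ) := by exact_mod_cast ht1
    nlinarith [mul_le_mul_of_nonneg_left hD ht0]

lemma Zset_card_le {α ε : ℝ} {D : ℕ} (hG : ArboricityLE G α) (hα : 1 ≤ α)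
    (hε : 0 < ε) (hD : (2 + ε) * α + 1 ≤ (D : ℝ) + 1) (k : ℕ) :
    ((Zset G D k).card : ℝ) * (1 + ε)^k ≤ (Fintype.card V : ℝ) := by
  induction k with
  | zero => simp [Zset]
  | succ m ih =>
    have hs := Zset_shrink G hG hα hε hD m
    have hpow : (0:ℝ) ≤ (1 + ε)^m := by positivity
    calc ((Zset G D (m+1)).card : ℝ) * (1 + ε)^(m+1)
        = (((Zset G D (m+1)).card : ℝ) * (1 + ε)) * (1 + ε)^m := by ring
      _ ≤ ((Zset G D m).card : ℝ) * (1 + ε)^m := mul_le_mul_of_nonneg_right hs hpow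
      _ ≤ _ := ih

lemma Zset_empty {α ε : ℝ} {D : ℕ} (hG : ArboricityLE G α) (hα : 1 ≤ α)
    (hε : 0 < ε) (hD : (2 + ε) * α + 1 ≤ (D : ℝ) + 1) (hD1 : 1 ≤ D)
    (hV : 1 ≤ Fintype.card V) :
    Zset G D (⌈Real.logb (1 + ε) (Fintype.card V)⌉₊ + 1) = ∅ := by
  set m := ⌈Real.logb (1 + ε) (Fintype.card V)⌉₊ with hm
  have hb : (1:ℝ) < 1 + ε := by linarith
  have hn0 : (0:ℝ) < (Fintype.card V : ℝ) := by exact_mod_cast hV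
  have hpow : (Fintype.card V : ℝ) ≤ (1 + ε)^m := by
    have h1 : Real.logb (1 + ε) (Fintype.card V) ≤ (m : ℝ) := Nat.le_ceil _
    calc (Fintype.card V : ℝ) = (1 + ε) ^ Real.logb (1 + ε) (Fintype.card V) :=
          (Real.rpow_logb (by linarith) (by linarith) hn0).symm
      _ ≤ (1 + ε) ^ (m : ℝ) := Real.rpow_le_rpow_of_exponent_le (le_of_lt hb) h1
      _ = (1 + ε)^m := Real.rpow_natCast _ m
  have hcard : (Zset G D m).card ≤ 1 := by
    have h := Zset_card_le G hG hα hε hD m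
    have hp : (0:ℝ) < (1 + ε)^m := by positivity
    by_contra hc
    push_neg at hc
    have h2 : (2:ℝ) ≤ ((Zset G D m).card : ℝ) := by exact_mod_cast hc
    nlinarith
  rw [eq_empty_iff_forall_notMem]
  intro v hv
  have hv' : v ∈ Zset G D m := (filter_subset _ _) hv
  have hdeg : D + 1 ≤ (G.neighborFinset v ∩ Zset G D m).card := (mem_filter.mp hv).2
  have hsub : G.neighborFinset v ∩ Zset G D m ⊆ (Zset G D m).erase v := by
    intro w hw
    rcases mem_inter.mp hw with ⟨hw1, hw2⟩
    have hadj : G.Adj v w := (SimpleGraph.mem_neighborFinset G v w).mp hw1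
    exact mem_erase.mpr ⟨fun h => G.loopless.irrefl v (h ▸ hadj), hw2⟩
  have h1 := card_le_card hsub
  rw [card_erase_of_mem hv'] at h1
  omega

end St19Helpers

/-- for any `n`-node graph `G` of maximum degree `Δ` and arboricity at
most `α`, any proper partial edge coloring with colors in `[Δ + (2+ε)α]` leaving a
single edge `e` uncolored extends to a proper edge coloring of all of `G` with the
same palette, changing the colors of at most `2 + ⌈log_{1+ε} n⌉` edges. -/
theorem statement19 {V : Type*} [Fintype V] [DecidableEq V]
    (G : SimpleGraph V) [DecidableRel G.Adj] (n : ℕ) (hn : n = Fintype.card V)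
    (Δ α : ℕ) (hΔ : ∀ v : V, G.degree v ≤ Δ) (ε : ℝ) (hε : 0 < ε) (hε1 : ε < 1)
    (hG : ArboricityLE G (α : ℝ)) (χ : Sym2 V → Option ℕ)
    (e : Sym2 V) (he : e ∈ G.edgeSet)
    (hproper : IsProperPartialEdgeColoring G χ)
    (huncol : χ e = none)
    (hrest : ∀ f ∈ G.edgeSet, f ≠ e → χ f ≠ none)
    (hpalette : ∀ f ∈ G.edgeSet, ∀ c : ℕ, χ f = some c →
      1 ≤ c ∧ (c : ℝ) ≤ (Δ : ℝ) + (2 + ε) * α) :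
    ∃ χ' : Sym2 V → Option ℕ,
      IsProperPartialEdgeColoring G χ' ∧
      (∀ f ∈ G.edgeSet, χ' f ≠ none) ∧
      (∀ f ∈ G.edgeSet, ∀ c : ℕ, χ' f = some c →
        1 ≤ c ∧ (c : ℝ) ≤ (Δ : ℝ) + (2 + ε) * α) ∧
      (G.edgeFinset.filter (fun f => χ' f ≠ χ f)).card ≤ 2 + ⌈Real.logb (1 + ε) n⌉₊ := by
  classical
  -- endpoints of `e`
  have hrep : ∃ x y, e = s(x, y) := by
    induction e using Sym2.ind with
    | _ x y => exact ⟨x, y, rfl⟩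
  obtain ⟨x0, y0, hexy⟩ := hrep
  have hadj0 : G.Adj x0 y0 := by rwa [hexy, SimpleGraph.mem_edgeSet] at he
  -- α ≥ 1
  have hα1 : (1:ℝ) ≤ (α : ℝ) := by
    have h2 : ({x0, y0} : Finset V).card = 2 := by
      rw [card_insert_of_notMem (by simpa using hadj0.ne), card_singleton]
    have hmem : e ∈ inducedEdges G {x0, y0} := by
      rw [st19_mem_inducedEdges]
      refine ⟨SimpleGraph.mem_edgeFinset.mpr he, ?_⟩
      intro x hx
      rw [hexy] at hx
      rcases Sym2.mem_iff.mp hx with rfl | rfl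
      · exact mem_insert_self _ _
      · exact mem_insert_of_mem (mem_singleton_self _)
    have hc1 : 1 ≤ (inducedEdges G {x0, y0}).card := card_pos.mpr ⟨e, hmem⟩
    have := hG {x0, y0} (by rw [h2])
    rw [h2] at this
    have hc1' : (1:ℝ) ≤ ((inducedEdges G {x0, y0}).card : ℝ) := by exact_mod_cast hc1
    norm_num at this
    exact_mod_cast le_trans hc1 this
  have hα0 : 1 ≤ α := by exact_mod_cast hα1
  -- numerology
  set D : ℕ := ⌊(2 + ε) * (α : ℝ)⌋₊ + 1 with hD_def
  set M : ℕ := Δ + ⌊(2 + ε) * (α : ℝ)⌋₊ with hM_def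
  have hx0 : (0:ℝ) ≤ (2 + ε) * (α : ℝ) := by positivity
  have hD : (2 + ε) * (α : ℝ) + 1 ≤ (D : ℝ) + 1 := by
    have := Nat.lt_floor_add_one ((2 + ε) * (α : ℝ))
    push_cast [hD_def]
    linarith
  have hfloor2 : 2 ≤ ⌊(2 + ε) * (α : ℝ)⌋₊ := by
    apply Nat.le_floor
    push_cast
    nlinarith
  have hD1 : 1 ≤ D := by omega
  have hMD : M = Δ + D - 1 := by omega
  have hMle : (M : ℝ) ≤ (Δ : ℝ) + (2 + ε) * (α : ℝ) := by
    have := Nat.floor_le hx0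
    push_cast [hM_def]
    linarith
  -- number of vertices
  have hV2 : 1 < Fintype.card V :=
    Fintype.one_lt_card_iff_nontrivial.mpr ⟨⟨x0, y0, hadj0.ne⟩⟩
  have hV1 : 1 ≤ Fintype.card V := by omega
  set K : ℕ := ⌈Real.logb (1 + ε) (n : ℝ)⌉₊ + 1 with hK_def
  have hZK : Zset G D K = ∅ := by
    have := Zset_empty G hG hα1 hε hD hD1 hV1
    rwa [hK_def, hn]
  -- the level function
  have h_ex : ∀ v : V, ∃ k, v ∉ Zset G D k := fun v => ⟨K, by simp [hZK]⟩
  set lvl : V → ℕ := fun v => Nat.find (h_ex v) - 1 with hlvl_def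
  have hfind1 : ∀ v, 1 ≤ Nat.find (h_ex v) := by
    intro v
    rcases Nat.eq_zero_or_pos (Nat.find (h_ex v)) with h0 | h1
    · exact absurd (h0 ▸ Nat.find_spec (h_ex v)) (by simp [Zset])
    · exact h1
  have hlvl_mem : ∀ v, v ∈ Zset G D (lvl v) := by
    intro v
    have hlt : lvl v < Nat.find (h_ex v) := by
      have := hfind1 v
      simp only [hlvl_def]
      omega
    have := Nat.find_min (h_ex v) hlt
    simpa using this
  have hlvl_not : ∀ v, v ∉ Zset G D (lvl v + 1) := by
    intro v
    have heq : lvl v + 1 = Nat.find (h_ex v) := by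
      have := hfind1 v
      simp only [hlvl_def]
      omega
    rw [heq]
    exact Nat.find_spec (h_ex v)
  have hlvl_le : ∀ v, lvl v + 1 ≤ K := by
    intro v
    have : Nat.find (h_ex v) ≤ K := Nat.find_le (by simp [hZK])
    have := hfind1 v
    simp only [hlvl_def]
    omega
  have hup : ∀ u : V, ((G.neighborFinset u).filter (fun w => lvl u ≤ lvl w)).card ≤ D := by
    intro u
    have hnot := hlvl_not u
    have hmem := hlvl_mem u
    have hdeg : ¬ (D + 1 ≤ (G.neighborFinset u ∩ Zset G D (lvl u)).card) := by
      intro hcon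
      exact hnot (mem_filter.mpr ⟨hmem, hcon⟩)
    have hsub : (G.neighborFinset u).filter (fun w => lvl u ≤ lvl w)
        ⊆ G.neighborFinset u ∩ Zset G D (lvl u) := by
      intro w hw
      rcases mem_filter.mp hw with ⟨hw1, hw2⟩
      exact mem_inter.mpr ⟨hw1, Zset_antitone G D hw2 (hlvl_mem w)⟩
    have := card_le_card hsub
    omega
  -- the main chain-recoloring claim
  have claim : ∀ ℓ : ℕ, ∀ χ₀ : Sym2 V → Option ℕ, ∀ f, f ∈ G.edgeSet →
      IsProperPartialEdgeColoring G χ₀ → χ₀ f = none →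
      (∀ h ∈ G.edgeSet, h ≠ f → χ₀ h ≠ none) →
      (∀ h ∈ G.edgeSet, ∀ c : ℕ, χ₀ h = some c → 1 ≤ c ∧ (c:ℝ) ≤ (Δ:ℝ) + (2+ε)*α) →
      (∃ x y, f = s(x, y) ∧ lvl x ≤ lvl y ∧ lvl x ≤ ℓ) →
      ∃ χ' : Sym2 V → Option ℕ, IsProperPartialEdgeColoring G χ' ∧
        (∀ h ∈ G.edgeSet, χ' h ≠ none) ∧
        (∀ h ∈ G.edgeSet, ∀ c : ℕ, χ' h = some c → 1 ≤ c ∧ (c:ℝ) ≤ (Δ:ℝ) + (2+ε)*α) ∧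
        (G.edgeFinset.filter (fun h => χ' h ≠ χ₀ h)).card ≤ ℓ + 1 := by
    intro ℓ
    induction ℓ using Nat.strong_induction_on with
    | _ ℓ ih =>
    intro χ₀ f hfE hprop0 hnone0 hrest0 hpal0 hwit
    obtain ⟨u, v, hfuv, hluv, hlℓ⟩ := hwit
    have hadj : G.Adj u v := by rwa [hfuv, SimpleGraph.mem_edgeSet] at hfE
    have hfEF : f ∈ G.edgeFinset := SimpleGraph.mem_edgeFinset.mpr hfE
    have hΔv : 1 ≤ Δ := by
      have h0 : 0 < G.degree v := G.degree_pos_iff_exists_adj v |>.mpr ⟨u, hadj.symm⟩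
      have := hΔ v
      omega
    -- colors used at `v` on edges other than `f`
    set Af := G.edgeFinset.filter (fun g => v ∈ g ∧ g ≠ f) with hAf_def
    set A := Af.image (fun g => (χ₀ g).getD 0) with hA_def
    have hAfsub : Af ⊆ (G.incidenceFinset v).erase f := by
      intro g hg
      rcases mem_filter.mp hg with ⟨hg1, hg2, hg3⟩
      exact mem_erase.mpr ⟨hg3, (G.mem_incidenceFinset v g).mpr
        ⟨SimpleGraph.mem_edgeFinset.mp hg1, hg2⟩⟩
    have hfInc : f ∈ G.incidenceFinset v := (G.mem_incidenceFinset v f).mpr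
      ⟨hfE, by rw [hfuv]; exact Sym2.mem_mk_right u v⟩
    have hAcard : A.card ≤ Δ - 1 := by
      have h1 : A.card ≤ Af.card := card_image_le
      have h2 := card_le_card hAfsub
      rw [card_erase_of_mem hfInc, SimpleGraph.card_incidenceFinset_eq_degree] at h2
      have h3 := hΔ v
      omega
    -- colors used at `u` on up-edges other than `f`
    set upN := (G.neighborFinset u).filter (fun w => lvl u ≤ lvl w) with hupN_def
    set Ef := G.edgeFinset.filter (fun g => g ≠ f ∧ ∃ w, g = s(u, w) ∧ lvl u ≤ lvl w)
      with hEf_def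
    set B := Ef.image (fun g => (χ₀ g).getD 0) with hB_def
    have hvupN : v ∈ upN := mem_filter.mpr ⟨(G.mem_neighborFinset u v).mpr hadj, hluv⟩
    have hEfsub : Ef ⊆ (upN.erase v).image (fun w => s(u, w)) := by
      intro g hg
      obtain ⟨hg1, hg2, w, rfl, hg4⟩ := mem_filter.mp hg
      have hadjw : G.Adj u w := by
        have := SimpleGraph.mem_edgeFinset.mp hg1
        rwa [SimpleGraph.mem_edgeSet] at this
      have hwv : w ≠ v := by
        rintro rfl
        exact hg2 hfuv.symm
      exact mem_image.mpr ⟨w, mem_erase.mpr ⟨hwv,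
        mem_filter.mpr ⟨(G.mem_neighborFinset u w).mpr hadjw, hg4⟩⟩, rfl⟩
    have hBcard : B.card ≤ D - 1 := by
      have h1 : B.card ≤ Ef.card := card_image_le
      have h2 : Ef.card ≤ ((upN.erase v).image (fun w => s(u, w))).card := card_le_card hEfsub
      have h3 : ((upN.erase v).image (fun w => s(u, w))).card ≤ (upN.erase v).card :=
        card_image_le
      have h4 : (upN.erase v).card = upN.card - 1 := card_erase_of_mem hvupN
      have h5 := hup u
      rw [← hupN_def] at h5
      omega
    -- choose a fresh color
    have hABcard : (A ∪ B).card < M := by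
      have := card_union_le A B
      omega
    have hcex : ∃ c ∈ Finset.Icc 1 M, c ∉ A ∪ B := by
      by_contra hc
      push_neg at hc
      have hsub : Finset.Icc 1 M ⊆ A ∪ B := fun c hcm => hc c hcm
      have := card_le_card hsub
      rw [Nat.card_Icc] at this
      omega
    obtain ⟨c, hcIcc, hcAB⟩ := hcex
    rw [mem_Icc] at hcIcc
    have hcA : c ∉ A := fun h => hcAB (mem_union_left _ h)
    have hcB : c ∉ B := fun h => hcAB (mem_union_right _ h)
    have hcpal : 1 ≤ c ∧ (c:ℝ) ≤ (Δ:ℝ) + (2+ε)*α :=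
      ⟨hcIcc.1, le_trans (by exact_mod_cast hcIcc.2) hMle⟩
    have hvc : ∀ g, g ∈ G.edgeSet → g ≠ f → v ∈ g → χ₀ g ≠ some c := by
      intro g hg1 hg2 hg3 hgc
      apply hcA
      exact mem_image.mpr ⟨g, mem_filter.mpr ⟨SimpleGraph.mem_edgeFinset.mpr hg1, hg3, hg2⟩,
        by rw [hgc]; rfl⟩
    have hshare_c : ∀ e₂, e₂ ∈ G.edgeSet → e₂ ≠ f → (∃ x, x ∈ f ∧ x ∈ e₂) →
        χ₀ e₂ = some c → u ∈ e₂ := by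
      rintro e₂ h1 h2 ⟨x, hxf, hxe⟩ h4
      rw [hfuv] at hxf
      rcases Sym2.mem_iff.mp hxf with rfl | rfl
      · exact hxe
      · exact absurd h4 (hvc e₂ h1 h2 hxe)
    by_cases hconf : ∃ g ∈ G.edgeFinset, g ≠ f ∧ u ∈ g ∧ χ₀ g = some c
    · -- there is a conflicting edge at u; it goes to a lower level
      obtain ⟨g, hgEF, hgf, hgu, hgc⟩ := hconf
      have hgE : g ∈ G.edgeSet := SimpleGraph.mem_edgeFinset.mp hgEF
      obtain ⟨w, hgw⟩ := Sym2.mem_iff_exists.mp hgu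
      have hlw : lvl w < lvl u := by
        by_contra hcon
        push_neg at hcon
        apply hcB
        exact mem_image.mpr ⟨g, mem_filter.mpr ⟨hgEF, hgf, ⟨w, hgw, hcon⟩⟩, by rw [hgc]; rfl⟩
      set χ₁ : Sym2 V → Option ℕ := Function.update (Function.update χ₀ f (some c)) g none
        with hχ₁_def
      have hχ₁g : χ₁ g = none := by simp [hχ₁_def]
      have hχ₁f : χ₁ f = some c := by
        rw [hχ₁_def, Function.update_of_ne (Ne.symm hgf), Function.update_self]
      have hχ₁other : ∀ h, h ≠ f → h ≠ g → χ₁ h = χ₀ h := by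
        intro h h1 h2
        rw [hχ₁_def, Function.update_of_ne h2, Function.update_of_ne h1]
      have huniq : ∀ e₂, e₂ ∈ G.edgeSet → u ∈ e₂ → χ₀ e₂ = some c → e₂ = g := by
        intro e₂ h1 h2 h3
        by_contra hx
        exact hprop0 e₂ h1 g hgE hx ⟨u, h2, hgu⟩ c h3 hgc
      have hprop1 : IsProperPartialEdgeColoring G χ₁ := by
        intro e₁ he₁ e₂ he₂ hne hsh d h1 h2
        by_cases hg1 : e₁ = g
        · rw [hg1, hχ₁g] at h1; cases h1
        by_cases hg2 : e₂ = g
        · rw [hg2, hχ₁g] at h2; cases h2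
        by_cases hf1 : e₁ = f
        · subst hf1
          rw [hχ₁f] at h1
          have hdc : c = d := by injection h1
          rw [hχ₁other e₂ (Ne.symm hne) hg2] at h2
          rw [← hdc] at h2
          have hue₂ : u ∈ e₂ := hshare_c e₂ he₂ (Ne.symm hne) hsh h2
          exact hg2 (huniq e₂ he₂ hue₂ h2)
        by_cases hf2 : e₂ = f
        · subst hf2
          rw [hχ₁f] at h2
          have hdc : c = d := by injection h2
          rw [hχ₁other e₁ hf1 hg1] at h1
          rw [← hdc] at h1
          have hue₁ : u ∈ e₁ := hshare_c e₁ he₁ hf1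
            (hsh.imp fun x hx => ⟨hx.2, hx.1⟩) h1
          exact hg1 (huniq e₁ he₁ hue₁ h1)
        · rw [hχ₁other e₁ hf1 hg1] at h1
          rw [hχ₁other e₂ hf2 hg2] at h2
          exact hprop0 e₁ he₁ e₂ he₂ hne hsh d h1 h2
      have hrest1 : ∀ h ∈ G.edgeSet, h ≠ g → χ₁ h ≠ none := by
        intro h hh hne
        by_cases h1 : h = f
        · rw [h1, hχ₁f]; simp
        · rw [hχ₁other h h1 hne]; exact hrest0 h hh h1
      have hpal1 : ∀ h ∈ G.edgeSet, ∀ d : ℕ, χ₁ h = some d →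
          1 ≤ d ∧ (d:ℝ) ≤ (Δ:ℝ) + (2+ε)*α := by
        intro h hh d hd
        by_cases h2 : h = g
        · rw [h2, hχ₁g] at hd; cases hd
        by_cases h1 : h = f
        · rw [h1, hχ₁f] at hd
          have : c = d := by injection hd
          exact this ▸ hcpal
        · rw [hχ₁other h h1 h2] at hd; exact hpal0 h hh d hd
      obtain ⟨χ', hp', ht', hpal', hcard'⟩ := ih (lvl w) (lt_of_lt_of_le hlw hlℓ) χ₁ g hgE
        hprop1 hχ₁g hrest1 hpal1
        ⟨w, u, by rw [hgw, Sym2.eq_swap], le_of_lt hlw, le_refl _⟩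
      refine ⟨χ', hp', ht', hpal', ?_⟩
      have hsub : G.edgeFinset.filter (fun h => χ' h ≠ χ₀ h)
          ⊆ insert f (G.edgeFinset.filter (fun h => χ' h ≠ χ₁ h)) := by
        intro h hh
        rcases mem_filter.mp hh with ⟨hhE, hhne⟩
        by_cases h1 : h = f
        · exact mem_insert.mpr (Or.inl h1)
        · refine mem_insert.mpr (Or.inr (mem_filter.mpr ⟨hhE, ?_⟩))
          by_cases h2 : h = g
          · rw [h2, hχ₁g]
            exact ht' g hgE
          · rw [hχ₁other h h1 h2]
            exact hhne
      have hc1 := card_le_card hsub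
      have hc2 := card_insert_le f (G.edgeFinset.filter (fun h => χ' h ≠ χ₁ h))
      have hlww : lvl w + 1 ≤ ℓ := lt_of_lt_of_le hlw hlℓ
      omega
    · -- no conflict: just color f with c
      push_neg at hconf
      refine ⟨Function.update χ₀ f (some c), ?_, ?_, ?_, ?_⟩
      · intro e₁ he₁ e₂ he₂ hne hsh d h1 h2
        by_cases hf1 : e₁ = f
        · subst hf1
          rw [Function.update_self] at h1
          have hdc : c = d := by injection h1
          rw [Function.update_of_ne (Ne.symm hne)] at h2
          rw [← hdc] at h2
          have hue₂ : u ∈ e₂ := hshare_c e₂ he₂ (Ne.symm hne) hsh h2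
          exact hconf e₂ (SimpleGraph.mem_edgeFinset.mpr he₂) (Ne.symm hne) hue₂ h2
        by_cases hf2 : e₂ = f
        · subst hf2
          rw [Function.update_self] at h2
          have hdc : c = d := by injection h2
          rw [Function.update_of_ne hf1] at h1
          rw [← hdc] at h1
          have hue₁ : u ∈ e₁ := hshare_c e₁ he₁ hf1
            (hsh.imp fun x hx => ⟨hx.2, hx.1⟩) h1
          exact hconf e₁ (SimpleGraph.mem_edgeFinset.mpr he₁) hf1 hue₁ h1
        · rw [Function.update_of_ne hf1] at h1
          rw [Function.update_of_ne hf2] at h2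
          exact hprop0 e₁ he₁ e₂ he₂ hne hsh d h1 h2
      · intro h hh
        by_cases h1 : h = f
        · rw [h1, Function.update_self]; simp
        · rw [Function.update_of_ne h1]; exact hrest0 h hh h1
      · intro h hh d hd
        by_cases h1 : h = f
        · rw [h1, Function.update_self] at hd
          have : c = d := by injection hd
          exact this ▸ hcpal
        · rw [Function.update_of_ne h1] at hd; exact hpal0 h hh d hd
      · have hsub : G.edgeFinset.filter (fun h => Function.update χ₀ f (some c) h ≠ χ₀ h)
            ⊆ {f} := by
          intro h hh
          rcases mem_filter.mp hh with ⟨_, hhne⟩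
          rw [mem_singleton]
          by_contra h1
          exact hhne (Function.update_of_ne h1 _ _)
        have := card_le_card hsub
        rw [card_singleton] at this
        omega
  -- apply the claim to the uncolored edge `e`
  have hwitE : ∃ x y, e = s(x, y) ∧ lvl x ≤ lvl y ∧ lvl x ≤ K - 1 := by
    rcases le_total (lvl x0) (lvl y0) with h | h
    · exact ⟨x0, y0, hexy, h, by have := hlvl_le x0; omega⟩
    · exact ⟨y0, x0, by rw [hexy, Sym2.eq_swap], h, by have := hlvl_le y0; omega⟩
  obtain ⟨χ', h1, h2, h3, h4⟩ := claim (K - 1) χ e he hproper huncol hrest hpalette hwitE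
  refine ⟨χ', h1, h2, h3, ?_⟩
  have hKval : K = ⌈Real.logb (1 + ε) (n : ℝ)⌉₊ + 1 := hK_def
  omega
end
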